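/- For every n ≥ 0, U_n equals the coefficient of x^n in the finite product ∏_{j=1}^{n} (1 − x^j)^{−2^{j−1}} of formal power series over ℚ (equivalently, U(x) = ∏_{j≥1} (1 − x^j)^{−2^{j−1}} where U(x) = ∑_{n≥0} U_n x^n), where (1 − x^j)^{−1} denotes the multiplicative inverse of 1 − x^j as a formal power series. -/

import Mathlib

open Finset PowerSeries Filter Nat

/-- `U n`: the number of unlabeled hierarchical orderings of total size `n`, i.e. multisets of
compositions of positive integers (nonempty finite sequences of positive integers) whose
sizes sum to `n`.  (`U 0 = 1`, via the empty multiset.) -/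
noncomputable def uhier (n : ℕ) : ℕ :=
  Nat.card {M : Multiset (List ℕ) //
    (∀ c ∈ M, c ≠ [] ∧ ∀ x ∈ c, 0 < x) ∧ (M.map List.sum).sum = n}

namespace OgfUhierAux

open scoped Classical

noncomputable section

variable {α : Type*}

/-- A convenience constructor for the power series whose coefficients indicate a subset. -/
def indicatorSeries (α : Type*) [Semiring α] (s : Set ℕ) : PowerSeries α :=
  PowerSeries.mk fun n => if n ∈ s then 1 else 0

theorem coeff_indicator (s : Set ℕ) [Semiring α] (n : ℕ) :
    coeff (R := α) n (indicatorSeries _ s) = if n ∈ s then 1 else 0 :=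
  coeff_mk _ _

theorem constantCoeff_indicator (s : Set ℕ) [Semiring α] :
    constantCoeff (R := α) (indicatorSeries _ s) = if 0 ∈ s then 1 else 0 :=
  rfl

theorem num_series' [Field α] (i : ℕ) :
    (1 - (X : PowerSeries α) ^ (i + 1))⁻¹ = indicatorSeries α {k | i + 1 ∣ k} := by
  rw [PowerSeries.inv_eq_iff_mul_eq_one]
  · ext n
    cases n with
    | zero => simp [mul_sub, zero_pow, constantCoeff_indicator]
    | succ n =>
      simp only [coeff_one, if_false, mul_sub, mul_one, coeff_indicator,
        LinearMap.map_sub, reduceCtorEq]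
      simp_rw [coeff_mul, coeff_X_pow, coeff_indicator, @boole_mul _ _ _ _]
      erw [@sum_ite _ _ _ _ _ (fun _ => Classical.propDecidable _), sum_ite]
      simp_rw [@filter_filter _ _ _ _ _, sum_const_zero, add_zero, sum_const, nsmul_eq_mul, mul_one,
        sub_eq_iff_eq_add, zero_add]
      symm
      split_ifs with h
      · suffices #{a ∈ antidiagonal (n + 1) | i + 1 ∣ a.fst ∧ a.snd = i + 1} = 1 by
          simp only [Set.mem_setOf_eq]; convert congr_arg ((↑) : ℕ → α) this; norm_cast
        rw [Finset.card_eq_one]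
        cases' h with p hp
        refine ⟨((i + 1) * (p - 1), i + 1), ?_⟩
        ext ⟨a₁, a₂⟩
        simp only [mem_filter, Prod.mk_inj, HasAntidiagonal.mem_antidiagonal, mem_singleton]
        constructor
        · rintro ⟨a_left, ⟨a, rfl⟩, rfl⟩
          refine ⟨?_, rfl⟩
          rw [Nat.mul_sub_left_distrib, ← hp, ← a_left, mul_one, Nat.add_sub_cancel]
        · rintro ⟨rfl, rfl⟩
          match p with
          | 0 => rw [mul_zero] at hp; cases hp
          | p + 1 => rw [hp]; simp [mul_add]
      · suffices #{a ∈ antidiagonal (n + 1) | i + 1 ∣ a.fst ∧ a.snd = i + 1} = 0 by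
          simp only [Set.mem_setOf_eq]; convert congr_arg ((↑) : ℕ → α) this; norm_cast
        rw [Finset.card_eq_zero]
        apply Finset.eq_empty_of_forall_notMem
        simp only [Prod.forall, mem_filter, not_and, HasAntidiagonal.mem_antidiagonal]
        rintro _ h₁ h₂ ⟨a, rfl⟩ rfl
        apply h
        simp [← h₂]
  · simp [zero_pow]

/-- The finset of all compositions (nonempty lists of positive integers) of sum at most `n`. -/
def S (n : ℕ) : Finset (List ℕ) :=
  Finset.image (fun p : Σ j : Fin n, Composition (j.1 + 1) => p.2.blocks) Finset.univ

theorem mem_S {n : ℕ} {c : List ℕ} :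
    c ∈ S n ↔ c ≠ [] ∧ (∀ x ∈ c, 0 < x) ∧ c.sum ≤ n := by
  simp only [S, Finset.mem_image, Finset.mem_univ, true_and]
  constructor
  · rintro ⟨⟨j, comp⟩, rfl⟩
    have hs := comp.blocks_sum
    have hj := j.2
    dsimp only
    refine ⟨?_, fun x hx => comp.blocks_pos hx, ?_⟩
    · intro h
      rw [h] at hs
      simp at hs
    · omega
  · rintro ⟨h1, h2, h3⟩
    have hpos : 0 < c.sum := List.sum_pos c h2 h1
    exact ⟨⟨⟨c.sum - 1, by omega⟩, ⟨c, fun hi => h2 _ hi,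
      (Nat.succ_pred_eq_of_pos hpos).symm⟩⟩, rfl⟩

theorem sum_pos_of_mem_S {n : ℕ} {c : List ℕ} (hc : c ∈ S n) : 0 < c.sum := by
  rw [mem_S] at hc
  exact List.sum_pos c hc.2.1 hc.1

theorem card_fiber {n j : ℕ} (hj : j ∈ Finset.Icc 1 n) :
    #{c ∈ S n | c.sum = j} = 2 ^ (j - 1) := by
  rw [Finset.mem_Icc] at hj
  have himg : {c ∈ S n | c.sum = j}
      = Finset.image (fun c : Composition j => c.blocks) Finset.univ := by
    ext c
    simp only [Finset.mem_filter, Finset.mem_image, Finset.mem_univ, true_and, mem_S]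
    constructor
    · rintro ⟨⟨h1, h2, h3⟩, hsum⟩
      exact ⟨⟨c, fun hi => h2 _ hi, hsum⟩, rfl⟩
    · rintro ⟨comp, rfl⟩
      have hs := comp.blocks_sum
      refine ⟨⟨?_, fun x hx => comp.blocks_pos hx, by omega⟩, hs⟩
      intro h
      rw [h] at hs
      simp at hs
      omega
  rw [himg, Finset.card_image_of_injective _ (fun a b h => Composition.ext h),
    Finset.card_univ, composition_card]

theorem prod_eq (n : ℕ) :
    (∏ j ∈ Finset.Icc 1 n, ((1 - (X : PowerSeries ℚ) ^ j)⁻¹) ^ 2 ^ (j - 1)) =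
      ∏ c ∈ S n, (1 - (X : PowerSeries ℚ) ^ c.sum)⁻¹ := by
  rw [← Finset.prod_fiberwise_of_maps_to (g := List.sum) (t := Finset.Icc 1 n)
      (fun c hc => Finset.mem_Icc.mpr ⟨sum_pos_of_mem_S hc, (mem_S.1 hc).2.2⟩)
      (fun c => (1 - (X : PowerSeries ℚ) ^ c.sum)⁻¹)]
  refine Finset.prod_congr rfl fun j hj => ?_
  rw [Finset.prod_congr rfl (fun c hc => by rw [(Finset.mem_filter.1 hc).2]),
    Finset.prod_const, card_fiber hj]

theorem prod_boole' {ι : Type*} {s : Finset ι} {p : ι → Prop} {D : ∀ i, Decidable (p i)} :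
    (∏ i ∈ s, @ite ℚ (p i) (D i) 1 0) = if ∀ i ∈ s, p i then (1 : ℚ) else 0 := by
  split_ifs with h
  · exact Finset.prod_eq_one fun i hi => if_pos (h i hi)
  · push_neg at h
    obtain ⟨i, hi, hpi⟩ := h
    exact Finset.prod_eq_zero hi (if_neg hpi)

theorem sum_boole' {ι : Type*} {s : Finset ι} {p : ι → Prop} {D : ∀ i, Decidable (p i)} :
    (∑ i ∈ s, @ite ℚ (p i) (D i) 1 0) = #(@Finset.filter _ p D s) := by
  rw [Finset.card_filter]
  push_cast
  rfl

theorem coeff_prod_eq (n : ℕ) :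
    PowerSeries.coeff (R := ℚ) n (∏ c ∈ S n, (1 - (X : PowerSeries ℚ) ^ c.sum)⁻¹) =
      (#{f ∈ finsuppAntidiag (S n) n | ∀ c ∈ S n, c.sum ∣ f c} : ℚ) := by
  rw [Finset.prod_congr rfl (fun c hc => show (1 - (X : PowerSeries ℚ) ^ c.sum)⁻¹ =
      indicatorSeries ℚ {k | c.sum ∣ k} by
    have h : c.sum - 1 + 1 = c.sum := Nat.succ_pred_eq_of_pos (sum_pos_of_mem_S hc)
    rw [← h, num_series'])]
  rw [coeff_prod]
  simp only [coeff_indicator, Set.mem_setOf_eq]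
  refine (Finset.sum_congr rfl fun f _ => prod_boole').trans ?_
  refine Eq.trans sum_boole' ?_
  rw [Finset.filter_congr_decidable]
  convert rfl

theorem toFinset_subset_S {n : ℕ} {M : Multiset (List ℕ)}
    (hM : (∀ c ∈ M, c ≠ [] ∧ ∀ x ∈ c, 0 < x) ∧ (M.map List.sum).sum = n) :
    M.toFinset ⊆ S n := by
  intro c hc
  rw [Multiset.mem_toFinset] at hc
  rw [mem_S]
  refine ⟨(hM.1 c hc).1, (hM.1 c hc).2, ?_⟩
  rw [← hM.2]
  exact Multiset.single_le_sum (fun x _ => Nat.zero_le x) _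
    (Multiset.mem_map_of_mem _ hc)

set_option maxHeartbeats 1000000 in
/-- The key bijection between multisets of compositions and finsupps. -/
def mEquiv (n : ℕ) :
    {M : Multiset (List ℕ) //
      (∀ c ∈ M, c ≠ [] ∧ ∀ x ∈ c, 0 < x) ∧ (M.map List.sum).sum = n} ≃
    {f // f ∈ {f ∈ finsuppAntidiag (S n) n | ∀ c ∈ S n, c.sum ∣ f c}} where
  toFun M :=
    ⟨⟨M.1.toFinset, fun c => M.1.count c * c.sum, by
      intro c
      rw [Multiset.mem_toFinset]
      constructor
      · intro hc
        have hpos := List.sum_pos c (M.2.1 c hc).2 (M.2.1 c hc).1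
        have hcount := Multiset.count_pos.mpr hc
        show M.1.count c * c.sum ≠ 0
        exact Nat.mul_ne_zero (by omega) (by omega)
      · intro h
        rw [← Multiset.count_pos, Nat.pos_iff_ne_zero]
        intro hzero
        exact h (show M.1.count c * c.sum = 0 by rw [hzero, zero_mul])⟩, by
      have hsub : M.1.toFinset ⊆ S n := toFinset_subset_S M.2
      have hsum : ∑ c ∈ S n, M.1.count c * c.sum = n := by
        refine Eq.trans ?_ M.2.2
        rw [Finset.sum_multiset_map_count]
        simp only [smul_eq_mul]
        exact (Finset.sum_subset hsub (fun c _ hc => by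
          rw [Multiset.mem_toFinset] at hc
          rw [Multiset.count_eq_zero_of_notMem hc, zero_mul])).symm
      simp only [Finset.mem_filter, mem_finsuppAntidiag, Finsupp.coe_mk]
      exact ⟨⟨hsum, fun c hc => hsub (by simpa using hc)⟩,
        fun c _ => Dvd.intro_left _ rfl⟩⟩
  invFun f :=
    ⟨∑ c ∈ S n, Multiset.replicate (f.1 c / c.sum) c, by
      have hf2 := f.2
      simp only [Finset.mem_filter, mem_finsuppAntidiag] at hf2
      obtain ⟨hmem, hdvd⟩ := hf2
      constructor
      · intro c hc
        rw [Multiset.mem_sum] at hc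
        obtain ⟨i, hi, hci⟩ := hc
        rw [Multiset.eq_of_mem_replicate hci]
        exact ⟨(mem_S.1 hi).1, (mem_S.1 hi).2.1⟩
      · rw [← Multiset.coe_mapAddMonoidHom, map_sum]
        simp only [Multiset.coe_mapAddMonoidHom, Multiset.map_replicate]
        rw [Multiset.sum_sum]
        rw [Finset.sum_congr rfl (fun c hc => by
          rw [Multiset.sum_replicate, smul_eq_mul, Nat.div_mul_cancel (hdvd c hc)])]
        exact hmem.1⟩
  left_inv := by
    rintro ⟨M, hM⟩
    apply Subtype.ext
    show ∑ c ∈ S n, Multiset.replicate (M.count c * c.sum / c.sum) c = M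
    rw [Finset.sum_congr rfl (fun c hc => by
      rw [Nat.mul_div_cancel _ (sum_pos_of_mem_S hc)])]
    rw [← Finset.sum_subset (toFinset_subset_S hM) (fun c _ hc => by
      rw [Multiset.mem_toFinset] at hc
      rw [Multiset.count_eq_zero_of_notMem hc, Multiset.replicate_zero])]
    simp_rw [← Multiset.nsmul_singleton]
    exact Multiset.toFinset_sum_count_nsmul_eq M
  right_inv := by
    rintro ⟨f, hf⟩
    have hf2 := hf
    simp only [Finset.mem_filter, mem_finsuppAntidiag] at hf2
    obtain ⟨hmem, hdvd⟩ := hf2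
    apply Subtype.ext
    apply Finsupp.ext
    intro c
    show Multiset.count c (∑ c ∈ S n, Multiset.replicate (f c / c.sum) c) * c.sum = f c
    rw [Multiset.count_sum']
    simp_rw [Multiset.count_replicate]
    rw [Finset.sum_ite_eq' (S n) c (fun c => f c / c.sum)]
    split_ifs with h
    · exact Nat.div_mul_cancel (hdvd c h)
    · rw [zero_mul]
      symm
      rw [← Finsupp.notMem_support_iff]
      exact fun hc => h (hmem.2 hc)

theorem uhier_eq (n : ℕ) :
    uhier n = #{f ∈ finsuppAntidiag (S n) n | ∀ c ∈ S n, c.sum ∣ f c} := by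
  rw [uhier, ← Nat.card_eq_finsetCard]
  exact Nat.card_congr (mEquiv n)

end

end OgfUhierAux

/-- **Theorem 2 (unlabeled case).** For every `n ≥ 0`, `U_n` is the coefficient of `xⁿ` in
`∏_{j=1}^{n} (1 − x^j)^{−2^{j−1}}` over `ℚ` (equivalently,
`U(x) = ∏_{j≥1} (1 − x^j)^{−2^{j−1}}`). -/
theorem ogf_uhier (n : ℕ) :
    (uhier n : ℚ) =
      PowerSeries.coeff (R := ℚ) n
        (∏ j ∈ Finset.Icc 1 n, ((1 - (PowerSeries.X : PowerSeries ℚ) ^ j)⁻¹) ^ 2 ^ (j - 1)) := by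
  rw [OgfUhierAux.prod_eq, OgfUhierAux.coeff_prod_eq, OgfUhierAux.uhier_eq]
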